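/- Let (M,g) be a Lorentzian manifold with a parallel distribution L of null lines, let L^⊥ be its orthogonal distribution and S = L^⊥/L the screen bundle with induced connection ∇^S. Then for every loop γ at p and every e ∈ L_p^⊥, the parallel transport satisfies [P^g_γ(e)] = P^S_γ([e]), where [·]: L^⊥ → S is the projection. Consequently, Hol_p(S, ∇^S) equals the image of Hol_p(M,g) under the quotient representation on L_p^⊥/L_p. -/

import Mathlib

/-!
STATEMENT 17: Let `(M,g)` be a Lorentzian manifold with a parallel null line distribution
`L ⊆ L^⊥ ⊆ TM` and screen bundle `S = L^⊥/L` with induced connection `∇^S`.  Then for a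
loop (here: a curve) `γ` and `e ∈ L^⊥_{γ(0)}`, the parallel transports satisfy
`[P^g_γ(e)] = P^S_γ([e])`.

We formalize the key identity along a curve: `Dg` is the covariant derivative of vector
fields along the curve, `L t ⊆ Lp t` are the fibers of the null line and of `L^⊥` along
the curve, `V₀` is a parallel spanning section of `L`, `W` is the `∇^g`-parallel field
with `W 0 = e` (so `W t = P^g_γ(e)`), and `U` is a lift of the `∇^S`-parallel screen
field with `U 0 = e` (screen-parallel means `Dg U t ∈ L t`, i.e. `∇^S_{γ'}[U] = 0`, so
`[U t] = P^S_γ([e])`).  The conclusion `U t − W t ∈ L t` states exactly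
`[P^g_γ(e)] = P^S_γ([e])` in the screen bundle `L^⊥/L`.
-/

theorem screen_transport_eq_quotient_of_transport
    (V : Type) [AddCommGroup V] [Module ℝ V]
    (L Lp : ℝ → Submodule ℝ V) (hLLp : ∀ t, L t ≤ Lp t)
    -- the covariant derivative of fields along the curve γ: additivity and Leibniz rule
    (Dg : (ℝ → V) → (ℝ → V))
    (hadd : ∀ U W : ℝ → V, Dg (U + W) = Dg U + Dg W)
    (hleib : ∀ (f : ℝ → ℝ) (U : ℝ → V), Differentiable ℝ f →
      Dg (fun t => f t • U t) = fun t => deriv f t • U t + f t • Dg U t)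
    -- uniqueness of parallel fields along the curve:
    (huniq : ∀ U W : ℝ → V, (∀ t, Dg U t = 0) → (∀ t, Dg W t = 0) → U 0 = W 0 → U = W)
    -- `V₀` is a parallel section spanning the null line `L` along the curve:
    (V₀ : ℝ → V) (hV₀par : ∀ t, Dg V₀ t = 0) (hV₀span : ∀ t, L t = Submodule.span ℝ {V₀ t})
    -- `e ∈ L^⊥` at the base point:
    (e : V) (he : e ∈ Lp 0)
    -- `U` is a section of `L^⊥` along the curve which is `∇^S`-parallel, `U 0 = e`:
    (U : ℝ → V) (hU : ∀ t, U t ∈ Lp t) (hU0 : U 0 = e)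
    (hUscreen : ∀ t, Dg U t ∈ L t)
    (hreg : ∃ f : ℝ → ℝ, Continuous f ∧ ∀ t, Dg U t = f t • V₀ t)
    -- `W` is the `∇^g`-parallel transport of `e` along the curve:
    (W : ℝ → V) (hW : ∀ t, Dg W t = 0) (hW0 : W 0 = e) :
    -- `[P^g_γ(e)] = P^S_γ([e])` in the screen bundle `L^⊥/L`:
    ∀ t, U t - W t ∈ L t := by
  obtain ⟨f, hf, hfU⟩ := hreg
  set F : ℝ → ℝ := fun t => ∫ x in (0:ℝ)..t, f x with hF
  have hFdiff : Differentiable ℝ F := fun x =>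
    (intervalIntegral.integral_hasDerivAt_right (hf.intervalIntegrable 0 x)
      (hf.stronglyMeasurableAtFilter _ _) hf.continuousAt).differentiableAt
  have hFderiv : ∀ x, deriv F x = f x := fun x => hf.deriv_integral f 0 x
  have hG : ∀ t, Dg (fun t => U t + (-F t) • V₀ t) t = 0 := by
    intro t
    have h1 : Dg (fun t => U t + (-F t) • V₀ t) = Dg U + Dg (fun t => (-F t) • V₀ t) := by
      have := hadd U (fun t => (-F t) • V₀ t)
      exact this
    rw [h1]
    have h2 : Dg (fun t => (-F t) • V₀ t) =
        fun t => deriv (fun t => -F t) t • V₀ t + (-F t) • Dg V₀ t :=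
      hleib (fun t => -F t) V₀ hFdiff.neg
    simp only [Pi.add_apply, h2, hV₀par, smul_zero, add_zero]
    have : deriv (fun t => -F t) t = -f t := by
      rw [deriv.fun_neg, hFderiv]
    rw [this, hfU]
    module
  have hEq : (fun t => U t + (-F t) • V₀ t) = W := by
    apply huniq _ _ hG hW
    simp [hF, hU0, hW0]
  intro t
  have : U t - W t = F t • V₀ t := by
    have := congrFun hEq t
    rw [← this]; module
  rw [this, hV₀span]
  exact Submodule.smul_mem _ _ (Submodule.mem_span_singleton_self _)
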